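/- Consider a one-layer ReLU network with weight matrix W (rows w_iᵀ), preactivation bounds l ≤ 0 ≤ u with l < u componentwise, and cost vector c. For any fixed x with l ≤ Wx ≤ u, the inner LP over the relaxed network constraint set has the closed-form value sup{cᵀz : (x,z) ∈ N(W,l,u)} = Σ_{i=1}^{n_z} [ max(c_i, 0) · u_i(w_iᵀx − l_i)/(u_i − l_i) + min(c_i, 0) · max(w_iᵀx, 0) ]. -/
import Mathlib


open Finset Matrix

noncomputable section

/-- Membership of `(x, z)` in the relaxed ReLU network constraint set `N(W, l, u)`. -/
def InRelax {nx nz : ℕ} (W : Matrix (Fin nz) (Fin nx) ℝ) (l u : Fin nz → ℝ)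
    (x : Fin nx → ℝ) (z : Fin nz → ℝ) : Prop :=
  ∀ i, 0 ≤ z i ∧ W.mulVec x i ≤ z i ∧
    z i ≤ u i * (W.mulVec x i - l i) / (u i - l i)

/-- For bounds `l ≤ 0 ≤ u`, `l < u`, and any fixed `x` with
`l ≤ Wx ≤ u`, the inner LP `sup{cᵀz : (x, z) ∈ N(W,l,u)}` has attained value
`Σᵢ [max(cᵢ,0)·uᵢ(wᵢᵀx − lᵢ)/(uᵢ − lᵢ) + min(cᵢ,0)·max(wᵢᵀx, 0)]`. -/
theorem inner_lp_closed_form {nx nz : ℕ}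
    (W : Matrix (Fin nz) (Fin nx) ℝ) (l u : Fin nz → ℝ) (c : Fin nz → ℝ)
    (hsign : ∀ i, l i ≤ 0 ∧ 0 ≤ u i ∧ l i < u i)
    (x : Fin nx → ℝ)
    (hx : ∀ i, l i ≤ W.mulVec x i ∧ W.mulVec x i ≤ u i) :
    IsGreatest {v | ∃ z : Fin nz → ℝ, InRelax W l u x z ∧ v = ∑ i, c i * z i}
      (∑ i, (max (c i) 0 * (u i * (W.mulVec x i - l i) / (u i - l i)) +
        min (c i) 0 * max (W.mulVec x i) 0)) := by
  set a := W.mulVec x with ha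
  have hub : ∀ i, max (a i) 0 ≤ u i * (a i - l i) / (u i - l i) := by
    intro i
    obtain ⟨hl0, hu0, hlu⟩ := hsign i
    obtain ⟨hla, hau⟩ := hx i
    have hd : 0 < u i - l i := by linarith
    rw [max_le_iff]
    constructor
    · rw [le_div_iff₀ hd]; nlinarith
    · exact div_nonneg (mul_nonneg hu0 (by linarith)) hd.le
  have hub' : ∀ i, max (a i) 0 ≤ u i * (a i - l i) / (u i - l i) := hub
  constructor
  · refine ⟨fun i => if 0 ≤ c i then u i * (a i - l i) / (u i - l i)
      else max (a i) 0, ?_, ?_⟩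
    · intro i
      by_cases h : 0 ≤ c i <;> simp only [h, if_true, if_false] <;>
        constructor
      · exact le_trans (le_max_right _ _) (hub i)
      · exact ⟨le_trans (le_max_left _ _) (hub i), le_refl _⟩
      · exact le_max_right _ _
      · exact ⟨le_max_left _ _, hub i⟩
    · refine Finset.sum_congr rfl fun i _ => ?_
      by_cases h : 0 ≤ c i
      · simp [h, max_eq_left h, min_eq_right h]
      · push_neg at h
        simp [if_neg (not_le.mpr h), max_eq_right h.le, min_eq_left h.le]
  · rintro v ⟨z, hz, rfl⟩
    refine Finset.sum_le_sum fun i _ => ?_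
    obtain ⟨hz0, hza, hzu⟩ := hz i
    have hlb : max (a i) 0 ≤ z i := max_le hza hz0
    have h1 : max (c i) 0 * z i ≤ max (c i) 0 * (u i * (a i - l i) / (u i - l i)) :=
      mul_le_mul_of_nonneg_left hzu (le_max_right _ _)
    have h2 : min (c i) 0 * z i ≤ min (c i) 0 * max (a i) 0 :=
      mul_le_mul_of_nonpos_left hlb (min_le_right _ _)
    have : c i = max (c i) 0 + min (c i) 0 := by
      rcases le_total (c i) 0 with h | h <;> simp [max_eq_right, min_eq_left, max_eq_left, min_eq_right, h]
    nlinarith [h1, h2]
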